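/- Every point of the projected layer j (j > i) is 2D-dominated by some point of the projected layer i: if q ∈ S belongs to layer j of the 3D maxima layers and q.z > v, then there exists p ∈ S in layer i with p.z > v whose projection (p.x, p.y) dominates (q.x, q.y), for any 1 ≤ i < j. -/
import Mathlib


open scoped Classical

/-- 3D dominance: strict coordinatewise. `domS p q` means `p` dominates `q`. -/
def domS (p q : ℝ × ℝ × ℝ) : Prop := q.1 < p.1 ∧ q.2.1 < p.2.1 ∧ q.2.2 < p.2.2

noncomputable def maximaS (S : Finset (ℝ × ℝ × ℝ)) : Finset (ℝ × ℝ × ℝ) :=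
  S.filter fun p => ¬ ∃ q ∈ S, domS q p

noncomputable def residualS (S : Finset (ℝ × ℝ × ℝ)) : ℕ → Finset (ℝ × ℝ × ℝ)
  | 0 => S
  | i + 1 => residualS S i \ maximaS (residualS S i)

noncomputable def layerS (S : Finset (ℝ × ℝ × ℝ)) (i : ℕ) : Finset (ℝ × ℝ × ℝ) :=
  maximaS (residualS S i)

lemma domS_trans {a b c : ℝ × ℝ × ℝ} (h1 : domS a b) (h2 : domS b c) : domS a c :=
  ⟨h2.1.trans h1.1, h2.2.1.trans h1.2.1, h2.2.2.trans h1.2.2⟩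

lemma exists_maxima_dom (T : Finset (ℝ × ℝ × ℝ)) (q : ℝ × ℝ × ℝ)
    (h : ∃ r ∈ T, domS r q) : ∃ p ∈ maximaS T, domS p q := by
  classical
  set D := T.filter (fun r => domS r q) with hD
  have hDne : D.Nonempty := by
    obtain ⟨r, hrT, hrq⟩ := h
    exact ⟨r, Finset.mem_filter.2 ⟨hrT, hrq⟩⟩
  obtain ⟨p, hpD, hpmax⟩ := D.exists_max_image (fun r => r.1) hDne
  have hpT : p ∈ T := (Finset.mem_filter.1 hpD).1
  have hpq : domS p q := (Finset.mem_filter.1 hpD).2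
  refine ⟨p, Finset.mem_filter.2 ⟨hpT, ?_⟩, hpq⟩
  rintro ⟨s, hsT, hsp⟩
  have hsD : s ∈ D := Finset.mem_filter.2 ⟨hsT, domS_trans hsp hpq⟩
  exact absurd (hpmax s hsD) (not_le.2 hsp.1)

lemma residualS_antitone (S : Finset (ℝ × ℝ × ℝ)) {i j : ℕ} (h : i ≤ j) :
    residualS S j ⊆ residualS S i := by
  induction j with
  | zero => simpa [Nat.le_zero.1 h] using Finset.Subset.refl _
  | succ k ih =>
    rcases Nat.lt_or_ge i (k+1) with h' | h'
    · exact (Finset.sdiff_subset).trans (ih (Nat.lt_succ_iff.1 h'))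
    · have : i = k + 1 := le_antisymm h h'
      simp [this]

/-- Every point of the projected layer `j` (`j > i`) with z-coordinate `> v` is
2D-dominated by the projection of some layer-`i` point with z-coordinate `> v`. -/
theorem stmt11 (S : Finset (ℝ × ℝ × ℝ))
    (hx : ∀ a ∈ S, ∀ b ∈ S, a.1 = b.1 → a = b)
    (hy : ∀ a ∈ S, ∀ b ∈ S, a.2.1 = b.2.1 → a = b)
    (hz : ∀ a ∈ S, ∀ b ∈ S, a.2.2 = b.2.2 → a = b)
    (v : ℝ) (i j : ℕ) (hij : i < j)
    (q : ℝ × ℝ × ℝ) (hq : q ∈ layerS S j) (hqz : v < q.2.2) :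
    ∃ p ∈ layerS S i, v < p.2.2 ∧ q.1 ≤ p.1 ∧ q.2.1 ≤ p.2.1 := by
  have hqres : q ∈ residualS S (i+1) :=
    residualS_antitone S hij (Finset.filter_subset _ _ hq)
  have hqi : q ∈ residualS S i := (Finset.mem_sdiff.1 hqres).1
  have hqnm : q ∉ maximaS (residualS S i) := (Finset.mem_sdiff.1 hqres).2
  have hdom : ∃ r ∈ residualS S i, domS r q := by
    by_contra h
    exact hqnm (Finset.mem_filter.2 ⟨hqi, h⟩)
  obtain ⟨p, hp, hpq⟩ := exists_maxima_dom _ q hdom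
  exact ⟨p, hp, hqz.trans hpq.2.2, hpq.1.le, hpq.2.1.le⟩
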